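/- Let λ ∈ Γ̄_{N,K} be a Young diagram with at most N rows and at most K columns, and let λ* be the complement of λ in the λ₁ × N rectangle, rotated to a Young diagram (λ*_i = λ₁ − λ_{N+1−i}). Then at v = s^{−N}, the quantum dimensions agree: ⟨λ*⟩ = ⟨λ⟩, where ⟨μ⟩ = ∏_{cells c of μ} [N + cn(c)]/[hl(c)]. -/

import Mathlib

open Finset

/-- The quantum integer `[t] = (s^t - s^{-t})/(s - s⁻¹)`. -/
noncomputable def qint (s : ℂ) (t : ℤ) : ℂ := (s ^ t - s ^ (-t)) / (s - s⁻¹)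

/-- The quantum dimension `⟨λ⟩ = ∏_{cells c} [N + cn(c)]/[hl(c)]` at rank `N`, for a Young
diagram with at most `N` rows encoded by `l : ℕ → ℕ`; cells are `(i,j)` with `i < N`,
`j < l i` (0-based), `cn = j - i` and `hl = l i + λ^∨ j - i - j - 1`, where
`λ^∨ j = #{r < N : j < l r}`. -/
noncomputable def qdim (N : ℕ) (s : ℂ) (l : ℕ → ℕ) : ℂ :=
  ∏ i ∈ Finset.range N, ∏ j ∈ Finset.range (l i),
    qint s ((N : ℤ) + ((j : ℤ) - (i : ℤ))) /
      qint s ((l i : ℤ) + (((Finset.range N).filter (fun r => j < l r)).card : ℤ)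
        - (i : ℤ) - (j : ℤ) - 1)

lemma qint_ne_zero (M : ℕ) (s : ℂ) (hs : IsPrimitiveRoot s (2*M)) (t : ℕ)
    (h1 : 0 < t) (h2 : t < M) : qint s (t : ℤ) ≠ 0 := by
  have hs0 : s ≠ 0 := hs.ne_zero (by omega)
  have hM : 2 ≤ M := by omega
  have hden : s - s⁻¹ ≠ 0 := by
    intro h
    have hss : s * s = 1 := by
      have h' : s = s⁻¹ := by linear_combination h
      field_simp [hs0] at h'
      linear_combination h'
    have hs2 : s ^ 2 = 1 := by rw [sq]; exact hss
    have hdvd := (hs.pow_eq_one_iff_dvd 2).mp hs2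
    have := Nat.le_of_dvd (by norm_num) hdvd
    omega
  have hnum : s ^ (t:ℤ) - s ^ (-(t:ℤ)) ≠ 0 := by
    intro h
    have he : s ^ (t:ℤ) = s ^ (-(t:ℤ)) := by linear_combination h
    rw [zpow_neg] at he
    have hp0 : s ^ (t:ℤ) ≠ 0 := zpow_ne_zero _ hs0
    have h2t : s ^ (2*t) = 1 := by
      have hz : s ^ ((2*t:ℕ):ℤ) = 1 := by
        rw [show ((2*t:ℕ):ℤ) = (t:ℤ) + (t:ℤ) by push_cast; ring, zpow_add₀ hs0]
        have key := mul_inv_cancel₀ hp0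
        rw [← he] at key
        exact key
      exact_mod_cast hz
    have hdvd := (hs.pow_eq_one_iff_dvd (2*t)).mp h2t
    have hdvd' : M ∣ t := (mul_dvd_mul_iff_left (by norm_num : (2:ℕ) ≠ 0)).mp hdvd
    have := Nat.le_of_dvd h1 hdvd'
    omega
  exact div_ne_zero hnum hden

lemma row_eq (N K : ℕ) (s : ℂ) (hs : IsPrimitiveRoot s (2*(N+K)))
    (l : ℕ → ℕ) (hmono : Antitone l) (hcols : l 0 ≤ K) (i : ℕ) (hi : i < N) :
    (∏ j ∈ Finset.range (l i),
      qint s ((N : ℤ) + ((j : ℤ) - (i : ℤ))) /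
        qint s ((l i : ℤ) + (((Finset.range N).filter (fun r => j < l r)).card : ℤ)
          - (i : ℤ) - (j : ℤ) - 1))
    = (∏ r ∈ Finset.Ioo i N,
        qint s (((l i + (N-1-i) : ℕ) : ℤ) - ((l r + (N-1-r) : ℕ) : ℤ))) /
      ∏ t ∈ Finset.range (N-1-i), qint s ((t:ℤ)+1) := by
  set L := l i with hL
  set n := L + (N-1-i) with hn
  have hLK : L ≤ K := le_trans (hmono (Nat.zero_le i)) hcols
  set d : ℕ → ℕ := fun j => ((Ioo i N).filter (fun r => l r ≤ j)).card with hd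
  set m : ℕ → ℕ := fun j => j + d j with hm
  set nb : ℕ → ℕ := fun r => l r + (N-1-r) with hnb
  set f : ℕ → ℂ := fun t => qint s ((n:ℤ) - t) with hf
  have hd_le : ∀ j, d j ≤ N-1-i := by
    intro j
    have h1 := card_filter_le (Ioo i N) (fun r => l r ≤ j)
    rw [Nat.card_Ioo] at h1
    simp only [hd]
    omega
  have hd_mono : ∀ j j', j ≤ j' → d j ≤ d j' := by
    intro j j' h
    apply card_le_card
    intro r hr
    rw [mem_filter] at hr ⊢
    exact ⟨hr.1, le_trans hr.2 h⟩
  -- m strictly monotone hence injective on range L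
  have hm_mono : ∀ j j', j < j' → m j < m j' := by
    intro j j' h
    have := hd_mono j j' (le_of_lt h)
    simp only [hm]
    omega
  have hm_lt : ∀ j, j < L → m j < n := by
    intro j hj
    have := hd_le j
    simp only [hm, hn]
    omega
  have hnb_lt : ∀ r, r ∈ Ioo i N → nb r < n := by
    intro r hr
    rw [mem_Ioo] at hr
    have := hmono (le_of_lt hr.1)
    simp only [hnb, hn]
    omega
  have hnb_mono : ∀ r r', r ∈ Ioo i N → r' ∈ Ioo i N → r < r' → nb r' < nb r := by
    intro r r' hr hr' h
    rw [mem_Ioo] at hr hr'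
    have := hmono (le_of_lt h)
    simp only [hnb]
    omega
  have hne : ∀ j, j < L → ∀ r, r ∈ Ioo i N → m j ≠ nb r := by
    intro j hj r hr heq
    rw [mem_Ioo] at hr
    simp only [hm, hnb] at heq
    by_cases hc : l r ≤ j
    · have hsub : Ico r N ⊆ (Ioo i N).filter (fun r' => l r' ≤ j) := by
        intro x hx
        rw [mem_Ico] at hx
        rw [mem_filter, mem_Ioo]
        exact ⟨⟨by omega, hx.2⟩, le_trans (hmono hx.1) hc⟩
      have hcard := card_le_card hsub
      rw [Nat.card_Ico] at hcard
      have : N - r ≤ d j := hcard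
      omega
    · push_neg at hc
      have hsub : (Ioo i N).filter (fun r' => l r' ≤ j) ⊆ Ioo r N := by
        intro x hx
        rw [mem_filter, mem_Ioo] at hx
        rw [mem_Ioo]
        refine ⟨?_, hx.1.2⟩
        by_contra hxr
        push_neg at hxr
        have := hmono hxr
        omega
      have hcard := card_le_card hsub
      rw [Nat.card_Ioo] at hcard
      have : d j ≤ N - r - 1 := hcard
      omega
  set T1 := (range L).image m with hT1def
  set T2 := (Ioo i N).image nb with hT2def
  have hT1 : T1 ⊆ range n := by
    intro x hx
    rw [hT1def, mem_image] at hx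
    obtain ⟨j, hj, rfl⟩ := hx
    rw [mem_range] at hj ⊢
    exact hm_lt j hj
  have hT2 : T2 ⊆ range n := by
    intro x hx
    rw [hT2def, mem_image] at hx
    obtain ⟨r, hr, rfl⟩ := hx
    rw [mem_range]
    exact hnb_lt r hr
  have hdisj : Disjoint T1 T2 := by
    rw [disjoint_left]
    intro a h1 h2
    rw [hT1def, mem_image] at h1
    rw [hT2def, mem_image] at h2
    obtain ⟨j, hj, rfl⟩ := h1
    obtain ⟨r, hr, heq⟩ := h2
    rw [mem_range] at hj
    exact hne j hj r hr heq.symm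
  have hinj1 : ∀ x ∈ range L, ∀ y ∈ range L, m x = m y → x = y := by
    intro x hx y hy h
    rcases lt_trichotomy x y with h' | h' | h'
    · exact absurd h (ne_of_lt (hm_mono x y h'))
    · exact h'
    · exact absurd h.symm (ne_of_lt (hm_mono y x h'))
  have hinj2 : ∀ x ∈ Ioo i N, ∀ y ∈ Ioo i N, nb x = nb y → x = y := by
    intro x hx y hy h
    rcases lt_trichotomy x y with h' | h' | h'
    · exact absurd h.symm (ne_of_lt (hnb_mono x y hx hy h'))
    · exact h'
    · exact absurd h (ne_of_lt (hnb_mono y x hy hx h'))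
  have hcard1 : T1.card = L := by
    rw [hT1def, card_image_of_injOn hinj1, card_range]
  have hcard2 : T2.card = N-1-i := by
    rw [hT2def, card_image_of_injOn hinj2, Nat.card_Ioo]
    omega
  have hunion : T1 ∪ T2 = range n := by
    apply eq_of_subset_of_card_le (union_subset hT1 hT2)
    rw [card_union_of_disjoint hdisj, hcard1, hcard2, card_range]
  have hprod : (∏ j ∈ range L, f (m j)) * (∏ r ∈ Ioo i N, f (nb r))
      = ∏ t ∈ range n, f t := by
    rw [← prod_image hinj1, ← prod_image hinj2, ← prod_union hdisj, hunion]
  have hrefl : ∏ t ∈ range n, f t = ∏ t ∈ range n, qint s ((t:ℤ)+1) := by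
    rw [← prod_range_reflect (fun t => qint s ((t:ℤ)+1)) n]
    apply prod_congr rfl
    intro t ht
    rw [mem_range] at ht
    simp only [hf]
    congr 1
    push_cast [show n - 1 - t + 1 = n - t by omega]
    omega
  have hsplit : (∏ t ∈ range (N-1-i), qint s ((t:ℤ)+1)) *
      (∏ j ∈ range L, qint s ((N : ℤ) + ((j : ℤ) - (i : ℤ)))) =
      ∏ t ∈ range n, qint s ((t:ℤ)+1) := by
    rw [hn, add_comm L (N-1-i), prod_range_add]
    congr 1
    apply prod_congr rfl
    intro j hj
    congr 1
    push_cast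
    omega
  -- denominator rewrite
  have hden : ∀ j ∈ range L, qint s ((l i : ℤ) + (((Finset.range N).filter (fun r => j < l r)).card : ℤ)
          - (i : ℤ) - (j : ℤ) - 1) = f (m j) := by
    intro j hj
    rw [mem_range] at hj
    have hconj : ((range N).filter (fun r => j < l r)).card
        = (i+1) + ((Ioo i N).filter (fun r => j < l r)).card := by
      have hsplitset : range N = range (i+1) ∪ Ioo i N := by
        ext x
        simp only [mem_union, mem_range, mem_Ioo]
        omega
      have hdisj2 : Disjoint ((range (i+1)).filter (fun r => j < l r))
          ((Ioo i N).filter (fun r => j < l r)) := by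
        apply disjoint_filter_filter
        rw [disjoint_left]
        intro a h1 h2
        rw [mem_range] at h1
        rw [mem_Ioo] at h2
        omega
      rw [hsplitset, filter_union, card_union_of_disjoint hdisj2]
      congr 1
      rw [filter_true_of_mem, card_range]
      intro r hr
      rw [mem_range] at hr
      have := hmono (show r ≤ i by omega)
      omega
    have hcd : ((Ioo i N).filter (fun r => j < l r)).card + d j = N-1-i := by
      have := card_filter_add_card_filter_not (s := Ioo i N)
        (p := fun r => j < l r)
      rw [Nat.card_Ioo] at this
      have heq2 : ((Ioo i N).filter (fun r => ¬ j < l r)).card = d j := by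
        simp only [hd, not_lt]
      omega
    simp only [hf, hm]
    congr 1
    rw [hconj]
    have hdj := hd_le j
    push_cast
    omega
  rw [prod_div_distrib]
  rw [prod_congr rfl hden]
  have hHne : (∏ j ∈ range L, f (m j)) ≠ 0 := by
    rw [prod_ne_zero_iff]
    intro j hj
    rw [mem_range] at hj
    have h1 := hm_lt j hj
    simp only [hf]
    rw [show (n:ℤ) - (m j : ℤ) = ((n - m j : ℕ) : ℤ) by push_cast; omega]
    exact qint_ne_zero (N+K) s hs (n - m j) (by omega) (by simp only [hn] at *; omega)
  have hGne : (∏ t ∈ range (N-1-i), qint s ((t:ℤ)+1)) ≠ 0 := by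
    rw [prod_ne_zero_iff]
    intro t ht
    rw [mem_range] at ht
    rw [show ((t:ℤ)+1) = ((t+1 : ℕ) : ℤ) by push_cast; ring]
    exact qint_ne_zero (N+K) s hs (t+1) (by omega) (by omega)
  rw [div_eq_div_iff hHne hGne]
  have hD : (∏ r ∈ Finset.Ioo i N,
        qint s (((l i + (N-1-i) : ℕ) : ℤ) - ((l r + (N-1-r) : ℕ) : ℤ)))
      = ∏ r ∈ Ioo i N, f (nb r) := by
    apply prod_congr rfl
    intro r hr
    simp only [hf, hnb, hn, hL]
  rw [hD]
  calc (∏ j ∈ range L, qint s ((N : ℤ) + ((j : ℤ) - (i : ℤ)))) *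
        (∏ t ∈ range (N-1-i), qint s ((t:ℤ)+1))
      = ∏ t ∈ range n, qint s ((t:ℤ)+1) := by rw [mul_comm]; exact hsplit
    _ = (∏ j ∈ range L, f (m j)) * (∏ r ∈ Ioo i N, f (nb r)) := by
        rw [hprod, hrefl]
    _ = (∏ r ∈ Ioo i N, f (nb r)) * (∏ j ∈ range L, f (m j)) := mul_comm _ _

/-- For `λ ∈ Γ̄_{N,K}` (at most `N` rows, at most `K` columns) and `s` a primitive
`2(N+K)`-th root of unity, the quantum dimension of the rotated complement
`λ*` (with parts `λ*_i = λ₁ - λ_{N+1-i}`) equals that of `λ`. -/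
theorem qdim_star_eq (N K : ℕ) (hN : 0 < N) (s : ℂ)
    (hs : IsPrimitiveRoot s (2 * (N + K)))
    (l : ℕ → ℕ) (hmono : Antitone l) (hrows : ∀ i, N ≤ i → l i = 0) (hcols : l 0 ≤ K) :
    qdim N s (fun i => l 0 - l (N - 1 - i)) = qdim N s l := by
  have key : ∀ (g : ℕ → ℕ), Antitone g → g 0 ≤ K →
      qdim N s g = (∏ i ∈ range N, ∏ r ∈ Ioo i N,
          qint s (((g i + (N-1-i) : ℕ) : ℤ) - ((g r + (N-1-r) : ℕ) : ℤ))) /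
        ∏ i ∈ range N, ∏ t ∈ range (N-1-i), qint s ((t:ℤ)+1) := by
    intro g hg hgK
    rw [qdim, ← prod_div_distrib]
    apply prod_congr rfl
    intro i hi
    rw [mem_range] at hi
    exact row_eq N K s hs g hg hgK i hi
  have hmono' : Antitone (fun i => l 0 - l (N - 1 - i)) := by
    intro a b hab
    simp only
    have := hmono (Nat.sub_le_sub_left hab (N-1))
    omega
  have hcols' : (fun i => l 0 - l (N - 1 - i)) 0 ≤ K := by
    simp only
    omega
  rw [key _ hmono' hcols', key l hmono hcols]
  congr 1
  rw [prod_sigma' (range N) (fun i => Ioo i N), prod_sigma' (range N) (fun i => Ioo i N)]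
  apply prod_nbij' (i := fun p => (⟨N-1-p.2, N-1-p.1⟩ : (_ : ℕ) × ℕ))
    (j := fun p => (⟨N-1-p.2, N-1-p.1⟩ : (_ : ℕ) × ℕ))
  · intro p hp
    obtain ⟨p1, p2⟩ := p
    rw [mem_sigma, mem_range, mem_Ioo] at hp ⊢
    simp only at hp ⊢
    omega
  · intro p hp
    obtain ⟨p1, p2⟩ := p
    rw [mem_sigma, mem_range, mem_Ioo] at hp ⊢
    simp only at hp ⊢
    omega
  · intro p hp
    rw [mem_sigma, mem_range, mem_Ioo] at hp
    obtain ⟨p1, p2⟩ := p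
    simp only at hp ⊢
    congr 1 <;> omega
  · intro p hp
    rw [mem_sigma, mem_range, mem_Ioo] at hp
    obtain ⟨p1, p2⟩ := p
    simp only at hp ⊢
    congr 1 <;> omega
  · intro p hp
    rw [mem_sigma, mem_range, mem_Ioo] at hp
    obtain ⟨p1, p2⟩ := p
    simp only at hp ⊢
    have e1 : N-1-(N-1-p1) = p1 := by omega
    have e2 : N-1-(N-1-p2) = p2 := by omega
    rw [e1, e2]
    have ha := hmono (Nat.zero_le (N-1-p1))
    have hb := hmono (Nat.zero_le (N-1-p2))
    congr 1
    omega
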